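/- Let t ≥ 4 be an even integer and k ≥ 1 an odd integer. Then the radio k-labeling number of the infinite distance graph D(1,t) satisfies rl_k(D(1,t)) ≤ (t/2)k². -/

import Mathlib

/-- The infinite distance graph on `ℤ` with distance set `D`: distinct integers
`i, j` are adjacent iff `|i - j| ∈ D`. -/
def distGraph (D : Set ℤ) : SimpleGraph ℤ where
  Adj i j := i ≠ j ∧ |i - j| ∈ D
  symm := by
    constructor
    intro i j h
    exact ⟨h.1.symm, by rw [abs_sub_comm]; exact h.2⟩
  loopless := by
    constructor
    intro i h
    exact h.1 rfl

/-- `c : ℤ → ℕ` is a radio `k`-labeling of the graph `G` on `ℤ`: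
`|c(u) - c(v)| ≥ k + 1 - d(u,v)` for all distinct `u, v`. -/
def IsRadioLabeling (G : SimpleGraph ℤ) (k : ℕ) (c : ℤ → ℕ) : Prop :=
  ∀ x y : ℤ, x ≠ y → (k : ℤ) + 1 - G.dist x y ≤ |(c x : ℤ) - c y|

/-- The labeling, as an integer-valued function. -/
def labZ (t k : ℕ) (x : ℤ) : ℤ :=
  if x % ((t : ℤ) * k + 1) ≤ ((t / 2 : ℕ) : ℤ) * k then
    (x % ((t : ℤ) * k + 1)) * k
  else
    (((k - 1) / 2 : ℕ) : ℤ) + (x % ((t : ℤ) * k + 1) - (((t / 2 : ℕ) : ℤ) * k + 1)) * k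

lemma labZ_nonneg (t k : ℕ) (x : ℤ) : 0 ≤ labZ t k x := by
  have hN : (0:ℤ) < (t : ℤ) * k + 1 := by positivity
  have h0 : 0 ≤ x % ((t : ℤ) * k + 1) := Int.emod_nonneg x (ne_of_gt hN)
  unfold labZ
  split_ifs with h
  · positivity
  · push_neg at h
    have : (0:ℤ) ≤ (x % ((t : ℤ) * k + 1) - (((t / 2 : ℕ) : ℤ) * k + 1)) := by omega
    positivity

lemma labZ_le (t k : ℕ) (s : ℤ) (hts : (t:ℤ) = 2*s) (hk : 1 ≤ k)
    (hsd : ((t/2 : ℕ) : ℤ) = s) (x : ℤ) :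
    labZ t k x ≤ s * k * k := by
  have hN : (0:ℤ) < (t : ℤ) * k + 1 := by positivity
  have h0 : 0 ≤ x % ((t : ℤ) * k + 1) := Int.emod_nonneg x (ne_of_gt hN)
  have h1 : x % ((t : ℤ) * k + 1) < (t : ℤ) * k + 1 := Int.emod_lt_of_pos x hN
  have hh : (((k - 1) / 2 : ℕ) : ℤ) ≤ (k:ℤ) - 1 := by
    have : (k - 1) / 2 ≤ k - 1 := Nat.div_le_self _ _
    have h2 : ((k-1 : ℕ) : ℤ) = (k:ℤ) - 1 := by push_cast [hk]; ring
    calc (((k - 1) / 2 : ℕ) : ℤ) ≤ ((k-1 : ℕ) : ℤ) := by exact_mod_cast this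
      _ = (k:ℤ) - 1 := h2
  unfold labZ
  rw [hsd]
  split_ifs with h
  · have hk0 : (0:ℤ) ≤ (k:ℤ) := by positivity
    nlinarith
  · push_neg at h
    set a := x % ((t : ℤ) * k + 1) with ha
    have he1 : (t:ℤ) * k = 2 * s * k := by rw [hts]
    have he2 : 2 * (s * (k:ℤ)) = 2 * s * k := by ring
    have h2 : a ≤ 2 * s * k := by omega
    have hk0 : (0:ℤ) ≤ (k:ℤ) := by positivity
    have : (a - (s * k + 1)) ≤ s * k - 1 := by omega
    nlinarith

/-- Any walk in D(1,t) from x to y gives a decomposition x - y = u + v t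
with |u| + |v| ≤ length. -/
lemma walk_decomp (t : ℕ) : ∀ {x y : ℤ} (w : (distGraph {1, (t:ℤ)}).Walk x y),
    ∃ u v : ℤ, x - y = u + v * t ∧ |u| + |v| ≤ w.length := by
  intro x y w
  induction w with
  | nil => exact ⟨0, 0, by ring, by simp⟩
  | @cons x b y hadj p ih =>
    obtain ⟨u, v, hz, hl⟩ := ih
    have habs : |x - b| = 1 ∨ |x - b| = (t:ℤ) := by
      have := hadj.2
      simpa [Set.mem_insert_iff] using this
    have hlen : (SimpleGraph.Walk.cons hadj p).length = p.length + 1 :=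
      SimpleGraph.Walk.length_cons _ _
    rcases habs with h1 | ht
    · rcases abs_eq (by norm_num : (0:ℤ) ≤ 1) |>.mp h1 with he | he
      all_goals {
        refine ⟨u + (x - b), v, by linarith [hz], ?_⟩
        rw [hlen]
        have : |u + (x-b)| ≤ |u| + 1 := by
          calc |u + (x-b)| ≤ |u| + |x-b| := abs_add_le _ _
            _ = |u| + 1 := by rw [h1]
        push_cast
        linarith }
    · have ht0 : (0:ℤ) ≤ (t:ℤ) := by positivity
      rcases (abs_eq ht0).mp ht with he | he
      · refine ⟨u, v + 1, by rw [show x = b + (t:ℤ) by omega]; ring_nf; linarith [hz], ?_⟩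
        rw [hlen]
        have : |v + 1| ≤ |v| + 1 := by
          calc |v+1| ≤ |v| + |(1:ℤ)| := abs_add_le _ _
            _ = |v| + 1 := by norm_num
        push_cast
        linarith
      · refine ⟨u, v - 1, by rw [show x = b - (t:ℤ) by omega]; ring_nf; linarith [hz], ?_⟩
        rw [hlen]
        have : |v - 1| ≤ |v| + 1 := by
          calc |v-1| ≤ |v| + |(-1:ℤ)| := abs_sub _ _
            _ = |v| + 1 := by norm_num
        push_cast
        linarith

lemma distGraph_reachable (t : ℕ) (x y : ℤ) :
    (distGraph {1, (t:ℤ)}).Reachable x y := by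
  have step : ∀ z : ℤ, (distGraph {1, (t:ℤ)}).Adj z (z+1) := by
    intro z
    refine ⟨by omega, ?_⟩
    have : |z - (z+1)| = 1 := by
      rw [show z - (z+1) = -1 by ring]; norm_num
    rw [this]; exact Set.mem_insert _ _
  have key : ∀ n : ℕ, ∀ z : ℤ, (distGraph {1, (t:ℤ)}).Reachable z (z + n) := by
    intro n
    induction n with
    | zero =>
      intro z
      have : z + ((0:ℕ):ℤ) = z := by push_cast; ring
      rw [this]
    | succ n ih =>
      intro z
      have h2 := (step (z + (n:ℤ))).reachable
      have he : (z + (n:ℤ)) + 1 = z + ((n+1 : ℕ) : ℤ) := by push_cast; ring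
      rw [he] at h2
      exact (ih z).trans h2
  rcases le_or_gt x y with h | h
  · have : y = x + ((y - x).toNat : ℤ) := by omega
    rw [this]; exact key _ x
  · have : x = y + ((x - y).toNat : ℤ) := by omega
    rw [this] at *
    exact (key _ y).symm

/-- positivity of |u|+|v| when u+vt ≠ 0 -/
lemma L_pos {u v w : ℤ} (h : u + v * w = 0 → False) : 1 ≤ |u| + |v| := by
  rcases eq_or_ne u 0 with rfl | hu
  · rcases eq_or_ne v 0 with rfl | hv
    · exact absurd (by ring) h
    · have : 1 ≤ |v| := Int.one_le_abs hv
      simp; omega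
  · have : 1 ≤ |u| := Int.one_le_abs hu
    have := abs_nonneg v
    omega

section Key

set_option maxHeartbeats 4000000 in
/-- Pure integer core lemma. -/
lemma labCore (s h a b u v m : ℤ) (hs : 2 ≤ s) (hh : 0 ≤ h)
    (ha0 : 0 ≤ a) (ha1 : a < 2*s*(2*h+1)+1)
    (hb0 : 0 ≤ b) (hb1 : b < 2*s*(2*h+1)+1)
    (hzz : u + v*(2*s) = a - b + (2*s*(2*h+1)+1)*m)
    (hne : ¬(a = b ∧ m = 0)) (hL1 : 1 ≤ |u| + |v|)
    (hcase : a ≤ s*(2*h+1) ∨ s*(2*h+1) < b) :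
    2*h+1+1 ≤ |(if a ≤ s*(2*h+1) then a*(2*h+1) else h + (a - (s*(2*h+1)+1))*(2*h+1)) -
      (if b ≤ s*(2*h+1) then b*(2*h+1) else h + (b - (s*(2*h+1)+1))*(2*h+1))| + |u| + |v| := by
  obtain ⟨K, hK⟩ : ∃ K : ℤ, K = 2*h+1 := ⟨_, rfl⟩
  rw [← hK] at ha1 hb1 hzz hcase ⊢
  obtain ⟨N, hN⟩ : ∃ N : ℤ, N = 2*s*K+1 := ⟨_, rfl⟩
  rw [← hN] at ha1 hb1 hzz
  have hK1 : 1 ≤ K := by omega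
  have hN0 : 0 < N := by nlinarith
  have habm : a - b + N*m = u + v*(2*s) := hzz.symm
  have hF1 : |a - b + N*m| ≤ (|u| + |v|) * (2*s) := by
    rw [habm]
    calc |u + v * (2*s)| ≤ |u| + |v * (2*s)| := abs_add_le _ _
      _ = |u| + |v| * (2*s) := by
          rw [abs_mul, abs_of_nonneg (by linarith : (0:ℤ) ≤ 2*s)]
      _ ≤ (|u| + |v|) * (2*s) := by nlinarith [abs_nonneg u]
  rcases le_or_gt a (s*K) with hA | hA
  · rw [if_pos hA]
    rcases le_or_gt b (s*K) with hB | hB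
    · -- both in A
      rw [if_pos hB]
      rcases eq_or_ne a b with heq | hab'
      · -- same residue
        have hm0 : m ≠ 0 := fun h0 => hne ⟨heq, h0⟩
        have h1 : N ≤ |a - b + N*m| := by
          have he2 : |a - b + N*m| = N * |m| := by
            rw [heq, show b - b + N*m = N*m by ring, abs_mul,
              abs_of_nonneg (le_of_lt hN0)]
          rw [he2]
          have : 1 ≤ |m| := Int.one_le_abs hm0
          nlinarith
        have h2 : N ≤ (|u| + |v|) * (2*s) := le_trans h1 hF1
        have h3 : K + 1 ≤ |u| + |v| := by nlinarith
        have h4 : |a*K - b*K| = 0 := by rw [heq]; simp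
        omega
      · -- different residues in A
        have h1 : K ≤ |a*K - b*K| := by
          rw [show a*K - b*K = (a-b)*K by ring, abs_mul,
            abs_of_nonneg (by omega : (0:ℤ) ≤ K)]
          have : 1 ≤ |a - b| := Int.one_le_abs (by omega)
          nlinarith
        omega
    · -- x in A, y in B
      rw [if_neg (not_le.mpr hB)]
      obtain ⟨d, hd⟩ : ∃ d : ℤ, d = a - b + s*K + 1 := ⟨_, rfl⟩
      have hDel : a * K - (h + (b - (s*K+1)) * K) = d * K - h := by rw [hd]; ring
      rw [hDel]
      rcases lt_trichotomy d 0 with hd0 | hd0 | hd0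
      · -- d ≤ -1
        have h1 : h + K ≤ |d*K - h| := by
          have h5 : d*K - h ≤ -(h+K) := by nlinarith
          have h6 := neg_le_abs (d*K - h)
          omega
        omega
      · -- d = 0 : a - b = -(sK+1), need |u|+|v| ≥ h+2
        have hab2 : a - b = -(s*K+1) := by omega
        rw [hd0]
        simp only [zero_mul, zero_sub, abs_neg, abs_of_nonneg hh]
        by_contra hcon
        push_neg at hcon
        have hLle : |u| + |v| ≤ h + 1 := by omega
        have hzb : |a - b + N*m| ≤ 2*s*(h+1) := by
          calc |a - b + N*m| ≤ (|u|+|v|)*(2*s) := hF1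
            _ ≤ 2*s*(h+1) := by nlinarith
        have hm01 : m = 0 ∨ m = 1 := by
          by_contra hm2
          push_neg at hm2
          rcases lt_trichotomy m 0 with h' | h' | h'
          · have hmle : m ≤ -1 := by omega
            have h5 : a - b + N*m ≤ -(s*K+1) - N := by
              rw [hab2]; nlinarith
            have h6 := neg_le_abs (a - b + N*m)
            nlinarith
          · omega
          · have hmge : 2 ≤ m := by omega
            have h5 : -(s*K+1) + 2*N ≤ a - b + N*m := by
              rw [hab2]; nlinarith
            have h6 := le_abs_self (a - b + N*m)
            nlinarith
        rcases hm01 with rfl | rfl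
        · -- z = -(sK+1) : u + 2sv = -sK-1
          have hu : u = -(s*K) - 1 - 2*s*v := by
            rw [hab2] at hzz; linarith [hzz]
          obtain ⟨r, hr⟩ : ∃ r : ℤ, r = K + 2*v := ⟨_, rfl⟩
          have hune : u = -(s*r) - 1 := by rw [hr, hu]; ring
          have hrodd : r ≠ 0 := by omega
          rcases lt_or_ge 0 r with hrpos | hrneg
          · have hr1 : 1 ≤ r := hrpos
            have huabs : |u| = s*r + 1 := by
              rw [hune, abs_of_nonpos (by nlinarith)]; ring
            have hv2 : r + 2*|v| ≥ K := by
              have h5 : r - 2*v = K := by omega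
              nlinarith [le_abs_self v, neg_le_abs v]
            nlinarith [abs_nonneg v,
              mul_nonneg (by omega : (0:ℤ) ≤ r - 1) (by omega : (0:ℤ) ≤ 2*s - 1)]
          · have hr1 : r ≤ -1 := by omega
            have huabs : |u| = -(s*r) - 1 := by
              rw [hune, abs_of_nonneg (by nlinarith)]
            have hvneg : v ≤ -1 := by omega
            have hvabs : |v| = -v := abs_of_nonpos (by omega)
            nlinarith [mul_nonneg (by omega : (0:ℤ) ≤ -r - 1) (by omega : (0:ℤ) ≤ 2*s + 1)]
        · -- z = sK : u + 2sv = sK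
          have hu : u = s*K - 2*s*v := by
            have h5 : a - b + N*1 = s*K := by rw [hab2, hN]; ring
            rw [h5] at hzz; linarith [hzz]
          obtain ⟨r, hr⟩ : ∃ r : ℤ, r = K - 2*v := ⟨_, rfl⟩
          have hune : u = s*r := by rw [hr, hu]; ring
          have hrodd : r ≠ 0 := by omega
          have hr1 : 1 ≤ |r| := Int.one_le_abs hrodd
          have huabs : |u| = s * |r| := by
            rw [hune, abs_mul, abs_of_nonneg (by omega : (0:ℤ) ≤ s)]
          have hv2 : |r| + 2*|v| ≥ K := by
            have h5 : r + 2*v = K := by omega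
            nlinarith [le_abs_self r, neg_le_abs r, le_abs_self v, neg_le_abs v]
          nlinarith [abs_nonneg v,
            mul_nonneg (by omega : (0:ℤ) ≤ |r| - 1) (by omega : (0:ℤ) ≤ 2*s - 1)]
      · rcases eq_or_lt_of_le (by omega : (1:ℤ) ≤ d) with hd1 | hd2
        · -- d = 1 : a - b = -sK, need |u|+|v| ≥ h+1
          have hab2 : a - b = -(s*K) := by omega
          rw [← hd1]
          have habs1 : |1*K - h| = h + 1 := by
            rw [one_mul, abs_of_nonneg (by omega)]
            omega
          rw [habs1]
          -- show |u|+|v| ≥ h+1 : since |z| ≥ sK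
          have hbig : s*K ≤ |a - b + N*m| := by
            rcases le_or_gt 1 m with hm1 | hm1
            · have h5 : a - b + N*m ≥ -(s*K) + N := by rw [hab2]; nlinarith
              have h6 := le_abs_self (a - b + N*m)
              have h7 : -(s*K) + N ≥ s*K + 1 := by rw [hN]; linarith
              linarith
            · have hmle : m ≤ 0 := by omega
              have h5 : a - b + N*m ≤ -(s*K) := by rw [hab2]; nlinarith
              have h6 := neg_le_abs (a - b + N*m)
              linarith
          have h2 : s*K ≤ (|u| + |v|) * (2*s) := le_trans hbig hF1
          have h3 : K ≤ 2*(|u| + |v|) := by nlinarith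
          omega
        · -- d ≥ 2
          have h1 : K + h + 1 ≤ |d*K - h| := by
            have h5 : 2*K - h ≤ d*K - h := by nlinarith
            have h6 := le_abs_self (d*K - h)
            omega
          have := abs_nonneg u
          have := abs_nonneg v
          omega
  · -- x in B; by hcase, y also in B
    rcases hcase with hA' | hB
    · omega
    · rw [if_neg (not_le.mpr hA), if_neg (not_le.mpr hB)]
      have hDel : h + (a - (s*K+1)) * K - (h + (b - (s*K+1)) * K) = (a-b)*K := by ring
      rw [hDel]
      rcases eq_or_ne a b with heq | hab'
      · have hm0 : m ≠ 0 := fun h0 => hne ⟨heq, h0⟩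
        have h1 : N ≤ |a - b + N*m| := by
          have he2 : |a - b + N*m| = N * |m| := by
            rw [heq, show b - b + N*m = N*m by ring, abs_mul,
              abs_of_nonneg (le_of_lt hN0)]
          rw [he2]
          have : 1 ≤ |m| := Int.one_le_abs hm0
          nlinarith
        have h2 : N ≤ (|u| + |v|) * (2*s) := le_trans h1 hF1
        have h3 : K + 1 ≤ |u| + |v| := by nlinarith
        have h4 : |(a-b)*K| = 0 := by rw [heq]; simp
        omega
      · have h1 : K ≤ |(a-b)*K| := by
          rw [abs_mul, abs_of_nonneg (by omega : (0:ℤ) ≤ K)]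
          have : 1 ≤ |a - b| := Int.one_le_abs (by omega)
          nlinarith
        omega

/-- Core arithmetic lemma. -/
lemma labKey (t k : ℕ) (s h : ℤ) (hs : 2 ≤ s) (hh : 0 ≤ h)
    (hts : (t:ℤ) = 2*s) (hks : (k:ℤ) = 2*h+1)
    (hsd : ((t/2 : ℕ) : ℤ) = s) (hhd : (((k-1)/2 : ℕ) : ℤ) = h)
    (x y u v : ℤ) (hne : x ≠ y) (hz : x - y = u + v * t) :
    (k:ℤ) + 1 ≤ |labZ t k x - labZ t k y| + |u| + |v| := by
  have hN0 : (0:ℤ) < 2*s*(2*h+1)+1 := by nlinarith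
  have hlab : ∀ z : ℤ, labZ t k z =
      (if z % (2*s*(2*h+1)+1) ≤ s*(2*h+1) then (z % (2*s*(2*h+1)+1))*(2*h+1)
       else h + (z % (2*s*(2*h+1)+1) - (s*(2*h+1)+1))*(2*h+1)) := by
    intro z
    unfold labZ
    rw [hsd, hhd, hks, hts]
  rw [hks, hlab x, hlab y]
  have ha0 : 0 ≤ x % (2*s*(2*h+1)+1) := Int.emod_nonneg x (ne_of_gt hN0)
  have ha1 : x % (2*s*(2*h+1)+1) < 2*s*(2*h+1)+1 := Int.emod_lt_of_pos x hN0
  have hb0 : 0 ≤ y % (2*s*(2*h+1)+1) := Int.emod_nonneg y (ne_of_gt hN0)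
  have hb1 : y % (2*s*(2*h+1)+1) < 2*s*(2*h+1)+1 := Int.emod_lt_of_pos y hN0
  obtain ⟨m, hm⟩ : ∃ m : ℤ, x - y =
      x % (2*s*(2*h+1)+1) - y % (2*s*(2*h+1)+1) + (2*s*(2*h+1)+1)*m := by
    refine ⟨x / (2*s*(2*h+1)+1) - y / (2*s*(2*h+1)+1), ?_⟩
    rw [Int.emod_def, Int.emod_def]; ring
  have hxy0 : x - y ≠ 0 := sub_ne_zero.mpr hne
  have hzz : u + v*(2*s) = x % (2*s*(2*h+1)+1) - y % (2*s*(2*h+1)+1) + (2*s*(2*h+1)+1)*m := by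
    rw [← hm, hz, hts]
  have hne2 : ¬(x % (2*s*(2*h+1)+1) = y % (2*s*(2*h+1)+1) ∧ m = 0) := by
    rintro ⟨he, rfl⟩
    rw [he] at hm
    simp at hm
    exact hxy0 (by omega)
  have hL1 : 1 ≤ |u| + |v| := by
    apply L_pos (w := (t:ℤ))
    intro h0
    exact hxy0 (by rw [hz, h0])
  rcases le_or_gt (x % (2*s*(2*h+1)+1)) (s*(2*h+1)) with hA | hA
  · exact labCore s h _ _ u v m hs hh ha0 ha1 hb0 hb1 hzz hne2 hL1 (Or.inl hA)
  · rcases le_or_gt (y % (2*s*(2*h+1)+1)) (s*(2*h+1)) with hB | hB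
    · have hswap := labCore s h (y % (2*s*(2*h+1)+1)) (x % (2*s*(2*h+1)+1))
        (-u) (-v) (-m) hs hh hb0 hb1 ha0 ha1
        (by rw [show -u + -v*(2*s) = -(u + v*(2*s)) by ring, hzz]; ring)
        (by rintro ⟨he, hm0⟩; exact hne2 ⟨he.symm, by omega⟩)
        (by rw [abs_neg, abs_neg]; exact hL1)
        (Or.inl hB)
      rw [abs_sub_comm, abs_neg, abs_neg] at hswap
      exact hswap
    · exact labCore s h _ _ u v m hs hh ha0 ha1 hb0 hb1 hzz hne2 hL1 (Or.inr hB)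

end Key

/-- For even `t ≥ 4` and odd `k ≥ 1`, `rl_k(D(1,t)) ≤ (t/2)k²`. -/
theorem radio_upper_D1t_pair_even (t k : ℕ) (ht : 4 ≤ t) (hte : Even t)
    (hk : 1 ≤ k) (hko : Odd k) :
    ∃ c : ℤ → ℕ, IsRadioLabeling (distGraph {1, (t : ℤ)}) k c ∧
      ∀ x : ℤ, (c x : ℝ) ≤ ((t : ℝ) / 2) * (k : ℝ) ^ 2 := by
  obtain ⟨s0, hs0⟩ := hte
  obtain ⟨h0, hh0⟩ := hko
  set s : ℤ := (s0 : ℤ) with hsdef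
  set h : ℤ := (h0 : ℤ) with hhdef
  have hts : (t:ℤ) = 2*s := by rw [hsdef]; push_cast [hs0]; ring
  have hks : (k:ℤ) = 2*h+1 := by rw [hhdef]; push_cast [hh0]; ring
  have hs : 2 ≤ s := by
    have : 2 ≤ s0 := by omega
    rw [hsdef]; exact_mod_cast this
  have hh : 0 ≤ h := by rw [hhdef]; positivity
  have hsd : ((t/2 : ℕ) : ℤ) = s := by
    have : t / 2 = s0 := by omega
    rw [this, hsdef]
  have hhd : (((k-1)/2 : ℕ) : ℤ) = h := by
    have : (k-1)/2 = h0 := by omega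
    rw [this, hhdef]
  refine ⟨fun x => (labZ t k x).toNat, ?_, ?_⟩
  · intro x y hne
    have hreach := distGraph_reachable t x y
    obtain ⟨w, hw⟩ := hreach.exists_walk_length_eq_dist
    obtain ⟨u, v, hz, hl⟩ := walk_decomp t w
    have hkey := labKey t k s h hs hh hts hks hsd hhd x y u v hne hz
    have hc : ((labZ t k x).toNat : ℤ) = labZ t k x := Int.toNat_of_nonneg (labZ_nonneg t k x)
    have hc' : ((labZ t k y).toNat : ℤ) = labZ t k y := Int.toNat_of_nonneg (labZ_nonneg t k y)
    rw [hc, hc']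
    have hld : (|u| + |v| : ℤ) ≤ ((distGraph {1, (t:ℤ)}).dist x y : ℤ) := by
      rw [← hw]; exact_mod_cast hl
    omega
  · intro x
    have hb := labZ_le t k s hts hk hsd x
    have hc : ((labZ t k x).toNat : ℤ) = labZ t k x := Int.toNat_of_nonneg (labZ_nonneg t k x)
    have hb2 : ((labZ t k x).toNat : ℤ) ≤ s * k * k := by rw [hc]; exact hb
    have hbr : ((labZ t k x).toNat : ℝ) ≤ (s : ℝ) * k * k := by exact_mod_cast hb2
    have hsr : ((t:ℝ)/2) = (s:ℝ) := by
      have : (t:ℝ) = 2*(s:ℝ) := by exact_mod_cast hts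
      rw [this]; ring
    rw [hsr]
    calc ((labZ t k x).toNat : ℝ) ≤ (s:ℝ) * k * k := hbr
      _ = (s:ℝ) * (k:ℝ)^2 := by ring
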